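/- arXiv:1305.1091 — 4 statements merged into one kernel-verified Lean document; each statement's English description precedes it below -/
import Mathlib

section
/- Let D ⊆ F_q^n be a subspace and let V = {v_1,...,v_n} be a basis of F_q^n. Suppose U ⊆ F_q^n is a subspace of dimension δ such that for every nonzero u ∈ U there exist j ∈ {1,...,n} and c ∈ D with (u ∗ v_j) · c ≠ 0, where ∗ is the component-wise product. Then the support of D (the set of coordinate positions where some element of D is nonzero) has size at least δ. -/
variable {F : Type*} [Field F] [Fintype F] {n : ℕ}

/-- The span of the first `i` basis vectors `w_1, ..., w_i` (1-based). -/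
def spanPrefix (w : Module.Basis (Fin n) F (Fin n → F)) (i : ℕ) : Submodule F (Fin n → F) :=
  Submodule.span F (⇑w '' {k : Fin n | (k : ℕ) < i})

/-- The standard dot product on `F^n`. -/
def dotP (u v : Fin n → F) : F := ∑ i, u i * v i

/-- `ρ` is the function `ρ̄_W`: `ρ 0 = 0` and for nonzero `c`, `ρ c = l`
(1-based, written as `k+1` for `k : Fin n`) iff
`c ∈ Span{w_1,...,w_l} \ Span{w_1,...,w_{l-1}}`. -/
def IsRho (w : Module.Basis (Fin n) F (Fin n → F)) (ρ : (Fin n → F) → ℕ) : Prop :=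
  ρ 0 = 0 ∧ ∀ c : Fin n → F, c ≠ 0 → ∃ k : Fin n,
    ρ c = (k : ℕ) + 1 ∧ c ∈ spanPrefix w ((k : ℕ) + 1) ∧ c ∉ spanPrefix w (k : ℕ)

/-- `m` is the function `m(c) = min{l : c · w_l ≠ 0}` (1-based). -/
def IsM (w : Module.Basis (Fin n) F (Fin n → F)) (m : (Fin n → F) → ℕ) : Prop :=
  ∀ c : Fin n → F, c ≠ 0 → ∃ k : Fin n,
    m c = (k : ℕ) + 1 ∧ dotP c (w k) ≠ 0 ∧ ∀ k' : Fin n, k' < k → dotP c (w k') = 0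

/-- Hamming weight. -/
noncomputable def wH (c : Fin n → F) : ℕ := Set.ncard {i : Fin n | c i ≠ 0}

/-- Support of a subspace. -/
def suppD (D : Submodule F (Fin n → F)) : Set (Fin n) := {i : Fin n | ∃ c ∈ D, c i ≠ 0}

/-- if `U` has dimension `δ` and every nonzero `u ∈ U` satisfies
`(u ∗ v_j) · c ≠ 0` for some `j` and some `c ∈ D`, then `#Supp(D) ≥ δ`. -/
theorem stmt_5 (v : Module.Basis (Fin n) F (Fin n → F))
    (D U : Submodule F (Fin n → F)) (δ : ℕ) (hU : Module.finrank F U = δ)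
    (h : ∀ u : Fin n → F, u ∈ U → u ≠ 0 →
      ∃ j : Fin n, ∃ c ∈ D, dotP (u * v j) c ≠ 0) :
    δ ≤ (suppD D).ncard := by
  classical
  subst hU
  set S := suppD D with hS
  haveI : Fintype S := Fintype.ofFinite S
  let L : (Fin n → F) →ₗ[F] (S → F) := LinearMap.funLeft F F Subtype.val
  have hinj : ∀ u ∈ U, L u = 0 → u = 0 := by
    intro u hu h0
    by_contra hne
    obtain ⟨j, c, hc, hdc⟩ := h u hu hne
    apply hdc
    unfold dotP
    apply Finset.sum_eq_zero
    intro i _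
    by_cases hci : c i = 0
    · simp [hci]
    · have hiS : i ∈ S := ⟨c, hc, hci⟩
      have hu0 : u i = 0 := congrFun h0 ⟨i, hiS⟩
      simp [Pi.mul_apply, hu0]
  have hinj' : Function.Injective (L.comp U.subtype) := by
    rw [← LinearMap.ker_eq_bot]
    ext x
    simp only [LinearMap.mem_ker, Submodule.mem_bot, LinearMap.comp_apply,
      Submodule.subtype_apply]
    constructor
    · intro hx
      exact Subtype.ext (hinj x x.2 hx)
    · rintro rfl; simp
  have hle := LinearMap.finrank_le_finrank_of_injective hinj'
  rwa [Module.finrank_pi, ← Nat.card_eq_fintype_card, Nat.card_coe_set_eq] at hle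
end

section
/- Enhanced advisory bound: Let c ∈ F_q^n be nonzero. Then w_H(c) ≥ max{#I' : I' ⊆ {1,...,n} and I' has the μ-property with respect to m(c)}. -/
variable {F : Type*} [Field F] [Fintype F] {n : ℕ}

/-- `I'` has the μ-property with respect to `l`: for all `i ∈ I'` there is `j`
with `(i,j)` OWB with respect to `I'` and `ρ̄_W(u_i ∗ v_j) = l`. -/
def MuProperty (u v : Module.Basis (Fin n) F (Fin n → F)) (ρ : (Fin n → F) → ℕ)
    (I' : Finset (Fin n)) (l : ℕ) : Prop :=
  ∀ i ∈ I', ∃ j : Fin n,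
    (∀ i' ∈ I', i' < i → ρ (u i' * v j) < ρ (u i * v j)) ∧
    ρ (u i * v j) = l

/-- Dot product with a fixed `c`, as a linear map. -/
def dotL (c : Fin n → F) : (Fin n → F) →ₗ[F] F where
  toFun x := dotP c x
  map_add' x y := by simp [dotP, mul_add, Finset.sum_add_distrib]
  map_smul' a x := by simp [dotP, Finset.mul_sum, mul_left_comm]

lemma dotL_apply (c x : Fin n → F) : dotL c x = dotP c x := rfl

lemma dot_prefix_zero (c : Fin n → F) (w : Module.Basis (Fin n) F (Fin n → F)) (k : Fin n)
    (hz : ∀ k' : Fin n, k' < k → dotP c (w k') = 0) :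
    ∀ x ∈ spanPrefix w (k : ℕ), dotP c x = 0 := by
  have h : spanPrefix w (k : ℕ) ≤ LinearMap.ker (dotL c) := by
    rw [spanPrefix, Submodule.span_le]
    rintro _ ⟨t, ht, rfl⟩
    have ht' : (t : ℕ) < (k : ℕ) := ht
    exact LinearMap.mem_ker.mpr (hz t (Fin.lt_def.mpr ht'))
  exact fun x hx => h hx

lemma dot_lt_zero (c : Fin n → F) (w : Module.Basis (Fin n) F (Fin n → F))
    (ρ : (Fin n → F) → ℕ) (hρ : IsRho w ρ) (k : Fin n)
    (hz : ∀ k' : Fin n, k' < k → dotP c (w k') = 0)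
    (x : Fin n → F) (hx : ρ x < (k : ℕ) + 1) : dotP c x = 0 := by
  rcases eq_or_ne x 0 with rfl | hx0
  · simp [dotP]
  obtain ⟨k₂, hk₂, hmem, -⟩ := hρ.2 x hx0
  have hle : ((k₂ : ℕ) + 1 : ℕ) ≤ (k : ℕ) := by omega
  have hsub : spanPrefix w ((k₂ : ℕ) + 1) ≤ spanPrefix w (k : ℕ) :=
    Submodule.span_mono (Set.image_mono (fun t ht => lt_of_lt_of_le ht hle))
  exact dot_prefix_zero c w k hz x (hsub hmem)

lemma dot_eq_ne_zero (c : Fin n → F) (w : Module.Basis (Fin n) F (Fin n → F))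
    (ρ : (Fin n → F) → ℕ) (hρ : IsRho w ρ) (k : Fin n)
    (hd : dotP c (w k) ≠ 0)
    (hz : ∀ k' : Fin n, k' < k → dotP c (w k') = 0)
    (x : Fin n → F) (hx : ρ x = (k : ℕ) + 1) : dotP c x ≠ 0 := by
  have hx0 : x ≠ 0 := by
    rintro rfl
    rw [hρ.1] at hx
    omega
  obtain ⟨k₂, hk₂, hmem, hnot⟩ := hρ.2 x hx0
  have hkk : k₂ = k := Fin.ext (by omega)
  rw [hkk] at hmem hnot
  have hset : {t : Fin n | (t : ℕ) < (k : ℕ) + 1} =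
      insert k {t : Fin n | (t : ℕ) < (k : ℕ)} := by
    ext t
    simp only [Set.mem_setOf_eq, Set.mem_insert_iff]
    constructor
    · intro h
      rcases Nat.lt_succ_iff_lt_or_eq.mp h with h | h
      · exact Or.inr h
      · exact Or.inl (Fin.ext h)
    · rintro (rfl | h)
      · omega
      · omega
  have hmem' : x ∈ Submodule.span F
      (insert (w k) (⇑w '' {t : Fin n | (t : ℕ) < (k : ℕ)})) := by
    rw [← Set.image_insert_eq, ← hset]
    exact hmem
  obtain ⟨a, z, hz', rfl⟩ := Submodule.mem_span_insert.mp hmem'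
  intro hdot
  have hzz : dotP c z = 0 := dot_prefix_zero c w k hz z hz'
  have : dotP c (a • w k + z) = a * dotP c (w k) := by
    have := (dotL c).map_add (a • w k) z
    rw [dotL_apply, dotL_apply, dotL_apply] at this
    rw [this, hzz, add_zero, ← dotL_apply, (dotL c).map_smul, dotL_apply,
      smul_eq_mul]
  rw [hdot] at this
  have ha : a = 0 := by
    rcases mul_eq_zero.mp this.symm with h | h
    · exact h
    · exact absurd h hd
  subst ha
  rw [zero_smul, zero_add] at hnot
  exact hnot hz'

set_option maxHeartbeats 800000 in
/-- enhanced advisory bound: for nonzero `c`, every `I'` with the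
μ-property with respect to `m(c)` satisfies `#I' ≤ w_H(c)`; i.e. `w_H(c)` is at
least the maximum such `#I'`. -/
theorem stmt_9 (u v w : Module.Basis (Fin n) F (Fin n → F))
    (ρ m : (Fin n → F) → ℕ) (hρ : IsRho w ρ) (hm : IsM w m)
    (c : Fin n → F) (hc : c ≠ 0)
    (I' : Finset (Fin n)) (hI : MuProperty u v ρ I' (m c)) :
    I'.card ≤ wH c := by
  classical
  have sum_subtype_support : ∀ h : Fin n → F, (∀ s, c s = 0 → h s = 0) →
      ∑ s : {s : Fin n // c s ≠ 0}, h s.1 = ∑ s, h s := by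
    intro h hh
    rw [← Finset.sum_subtype (Finset.univ.filter (fun s => c s ≠ 0))
      (by simp) h]
    exact Finset.sum_filter_of_ne (fun x _ hx => fun h0 => hx (hh x h0))
  obtain ⟨k, hmk, hdk, hdk'⟩ := hm c hc
  have hcard : wH c = Fintype.card {s : Fin n // c s ≠ 0} := by
    rw [wH, Set.ncard_eq_toFinset_card', Set.toFinset_card]
    rfl
  set f : ↥I' → ({s : Fin n // c s ≠ 0} → F) :=
    fun i s => c s.1 * u i.1 s.1 with hf
  have hli : LinearIndependent F f := by
    rw [Fintype.linearIndependent_iff]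
    intro g hg
    by_contra hne
    push_neg at hne
    obtain ⟨i₁, hi₁⟩ := hne
    set T : Finset ↥I' := Finset.univ.filter (fun i => g i ≠ 0) with hT
    have hTne : T.Nonempty := ⟨i₁, by simp [hT, hi₁]⟩
    set i₀ := T.max' hTne with hi₀
    have hgi₀ : g i₀ ≠ 0 := by
      have := T.max'_mem hTne
      simp only [hT, Finset.mem_filter, Finset.mem_univ, true_and] at this
      exact this
    obtain ⟨j, hOWB, hρj⟩ := hI i₀.1 i₀.2
    have hsum : ∑ i : ↥I', g i * dotP c (u i.1 * v j) = 0 := by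
      have h1 := congrArg (fun x : {s : Fin n // c s ≠ 0} → F =>
        ∑ s, x s * v j s.1) hg
      simp only [Finset.sum_apply, Pi.smul_apply, smul_eq_mul, Pi.zero_apply,
        zero_mul, Finset.sum_const_zero, Finset.sum_mul] at h1
      rw [Finset.sum_comm] at h1
      rw [← h1]
      apply Finset.sum_congr rfl
      intro i _
      have hrest : ∑ s : {s : Fin n // c s ≠ 0},
          c s.1 * (u i.1 * v j) s.1 = dotP c (u i.1 * v j) := by
        rw [dotP]
        exact sum_subtype_support (fun s => c s * (u i.1 * v j) s)
          (fun s h0 => by simp [h0])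
      rw [← hrest, Finset.mul_sum]
      apply Finset.sum_congr rfl
      intro s _
      simp only [hf, Pi.mul_apply]
      ring
    have hmain : ∑ i : ↥I', g i * dotP c (u i.1 * v j) =
        g i₀ * dotP c (u i₀.1 * v j) := by
      apply Finset.sum_eq_single i₀
      · intro i _ hne'
        by_cases hgi : g i = 0
        · rw [hgi, zero_mul]
        · have hiT : i ∈ T := by simp [hT, hgi]
          have hle : i ≤ i₀ := Finset.le_max' T i hiT
          have hlt : i < i₀ := lt_of_le_of_ne hle hne'
          have hlt' : i.1 < i₀.1 := hlt
          have hρlt : ρ (u i.1 * v j) < ρ (u i₀.1 * v j) :=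
            hOWB i.1 i.2 hlt'
          rw [hρj, hmk] at hρlt
          rw [dot_lt_zero c w ρ hρ k hdk' _ hρlt, mul_zero]
      · intro h
        exact absurd (Finset.mem_univ i₀) h
    rw [hmain] at hsum
    rcases mul_eq_zero.mp hsum with h | h
    · exact hgi₀ h
    · rw [hmk] at hρj
      exact dot_eq_ne_zero c w ρ hρ k hdk hdk' _ hρj h
  have hle := hli.fintype_card_le_finrank
  rw [Module.finrank_fintype_fun_eq_card] at hle
  calc I'.card = Fintype.card ↥I' := (Fintype.card_coe I').symm
    _ ≤ Fintype.card {s : Fin n // c s ≠ 0} := hle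
    _ = wH c := hcard.symm
end

section
/- Generalized enhanced advisory bound: For any subspace D ⊆ F_q^n, #Supp(D) ≥ max{#I' : I' ⊆ {1,...,n} and I' has the μ-property with respect to m(D)}, where m(D) = {m(c) : c ∈ D \ {0}}. -/
variable {F : Type*} [Field F] [Fintype F] {n : ℕ}

/-- `I'` has the μ-property with respect to a set `L ⊆ {1,...,n}`. -/
def MuPropertySet (u v : Module.Basis (Fin n) F (Fin n → F)) (ρ : (Fin n → F) → ℕ)
    (I' : Finset (Fin n)) (L : Set ℕ) : Prop :=
  ∀ i ∈ I', ∃ j : Fin n,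
    (∀ i' ∈ I', i' < i → ρ (u i' * v j) < ρ (u i * v j)) ∧
    ρ (u i * v j) ∈ L

set_option linter.unusedSectionVars false

section aux

variable {F : Type*} [Field F] [Fintype F] {n : ℕ}

lemma dotP_comm (x c : Fin n → F) : dotP x c = dotP c x := by
  simp [dotP, mul_comm]

lemma dotP_expand (w : Module.Basis (Fin n) F (Fin n → F)) (x c : Fin n → F) :
    dotP x c = ∑ l, w.repr x l * dotP (w l) c := by
  conv_lhs => rw [← w.sum_repr x]
  simp only [dotP, Finset.sum_apply, Pi.smul_apply, smul_eq_mul, Finset.sum_mul,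
    Finset.mul_sum, mul_assoc]
  exact Finset.sum_comm

lemma mem_spanPrefix {w : Module.Basis (Fin n) F (Fin n → F)} {x : Fin n → F} {a : ℕ} :
    x ∈ spanPrefix w a ↔ ∀ k : Fin n, a ≤ (k : ℕ) → w.repr x k = 0 := by
  rw [spanPrefix, Module.Basis.mem_span_image]
  constructor
  · intro h k hk
    by_contra h0
    have : (k : ℕ) < a := h (Finsupp.mem_support_iff.mpr h0)
    omega
  · intro h k hk
    simp only [Finset.mem_coe, Finsupp.mem_support_iff] at hk
    by_contra h0
    exact hk (h k (Nat.le_of_not_lt h0))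

lemma dotP_eq_zero_of_rho_lt {w : Module.Basis (Fin n) F (Fin n → F)}
    {ρ m : (Fin n → F) → ℕ} (hρ : IsRho w ρ) (hm : IsM w m)
    {x c : Fin n → F} (hc : c ≠ 0) (h : ρ x < m c) : dotP x c = 0 := by
  obtain ⟨k, hmk, hk1, hk2⟩ := hm c hc
  by_cases hx : x = 0
  · simp [dotP, hx]
  obtain ⟨kx, hρx, hx1, hx2⟩ := hρ.2 x hx
  rw [dotP_expand w]
  apply Finset.sum_eq_zero
  intro l _
  by_cases hl : w.repr x l = 0
  · simp [hl]
  · have hlk : (l : ℕ) < (kx : ℕ) + 1 := by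
      by_contra h0
      exact hl (mem_spanPrefix.1 hx1 l (Nat.le_of_not_lt h0))
    have hkk : (kx : ℕ) < (k : ℕ) := by
      rw [hρx, hmk] at h; omega
    have hlt : l < k := by
      rw [Fin.lt_def]; omega
    rw [dotP_comm (w l) c, hk2 l hlt, mul_zero]

lemma dotP_ne_zero_of_rho_eq {w : Module.Basis (Fin n) F (Fin n → F)}
    {ρ m : (Fin n → F) → ℕ} (hρ : IsRho w ρ) (hm : IsM w m)
    {x c : Fin n → F} (hc : c ≠ 0) (h : ρ x = m c) : dotP x c ≠ 0 := by
  obtain ⟨k, hmk, hk1, hk2⟩ := hm c hc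
  have hx : x ≠ 0 := by
    intro h0
    rw [h0, hρ.1, hmk] at h
    omega
  obtain ⟨kx, hρx, hx1, hx2⟩ := hρ.2 x hx
  have hkk : kx = k := by
    rw [hρx, hmk] at h
    exact Fin.ext (by omega)
  subst hkk
  rw [dotP_expand w, Finset.sum_eq_single kx]
  · apply mul_ne_zero
    · intro h0
      apply hx2
      rw [mem_spanPrefix]
      intro l hl
      rcases eq_or_ne l kx with rfl | hne
      · exact h0
      · have hv : (l : ℕ) ≠ (kx : ℕ) := fun hh => hne (Fin.ext hh)
        exact mem_spanPrefix.1 hx1 l (by omega)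
    · rw [dotP_comm]; exact hk1
  · intro l _ hne
    by_cases hl : w.repr x l = 0
    · simp [hl]
    have hlk : (l : ℕ) < (kx : ℕ) + 1 := by
      by_contra h0
      exact hl (mem_spanPrefix.1 hx1 l (Nat.le_of_not_lt h0))
    have hv : (l : ℕ) ≠ (kx : ℕ) := fun hh => hne (Fin.ext hh)
    have hlt : l < kx := by rw [Fin.lt_def]; omega
    rw [dotP_comm (w l) c, hk2 l hlt, mul_zero]
  · intro h0
    exact absurd (Finset.mem_univ kx) h0

lemma dotP_sum_mul {ι : Type*} [Fintype ι] (g : ι → F) (f : ι → Fin n → F) (c : Fin n → F) :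
    dotP (∑ i, g i • f i) c = ∑ i, g i * dotP (f i) c := by
  simp only [dotP, Finset.sum_apply, Pi.smul_apply, smul_eq_mul, Finset.sum_mul,
    Finset.mul_sum, mul_assoc]
  exact Finset.sum_comm

lemma dotP_rearrange (a b d : Fin n → F) :
    dotP (fun k => a k * b k) d = dotP (d * a) b := by
  unfold dotP
  apply Finset.sum_congr rfl
  intro k _
  simp only [Pi.mul_apply]
  ring

end aux

/-- generalized enhanced advisory bound: for any subspace `D`,
every `I'` with the μ-property with respect to `m(D)` satisfies
`#I' ≤ #Supp(D)`. -/
theorem stmt_10 (u v w : Module.Basis (Fin n) F (Fin n → F))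
    (ρ m : (Fin n → F) → ℕ) (hρ : IsRho w ρ) (hm : IsM w m)
    (D : Submodule F (Fin n → F)) (I' : Finset (Fin n))
    (hI : MuPropertySet u v ρ I'
      {l : ℕ | ∃ c : Fin n → F, c ∈ D ∧ c ≠ 0 ∧ m c = l}) :
    I'.card ≤ (suppD D).ncard := by
  classical
  have hch : ∀ i : {x // x ∈ I'}, ∃ jj : Fin n,
      (∀ i' ∈ I', i' < (i : Fin n) → ρ (u i' * v jj) < ρ (u (i : Fin n) * v jj)) ∧
      ∃ cc, cc ∈ D ∧ cc ≠ 0 ∧ m cc = ρ (u (i : Fin n) * v jj) := by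
    intro i
    obtain ⟨jj, h1, cc, hc⟩ := hI i i.2
    exact ⟨jj, h1, cc, hc⟩
  choose j hj c hcD hc0 hcm using hch
  have hsfin : (suppD D).Finite := Set.toFinite _
  haveI : Fintype (suppD D) := hsfin.fintype
  set ψ : {x // x ∈ I'} → ((suppD D) → F) :=
    fun i k => v (j i) (k : Fin n) * c i (k : Fin n) with hψdef
  have hli : LinearIndependent F ψ := by
    rw [Fintype.linearIndependent_iff]
    intro g hg
    by_contra hcon
    push_neg at hcon
    obtain ⟨i1, hi1⟩ := hcon
    set S : Finset {x // x ∈ I'} := Finset.univ.filter (fun i => g i ≠ 0) with hSdef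
    have hS : S.Nonempty := ⟨i1, by simp [hSdef, hi1]⟩
    obtain ⟨i0, hi0S, hi0min⟩ := S.exists_min_image (fun i => (i : Fin n)) hS
    have hgi0 : g i0 ≠ 0 := by
      simpa [hSdef] using hi0S
    have hfull : ∑ i, g i • (fun k => v (j i) k * c i k : Fin n → F) = 0 := by
      funext k
      by_cases hk : k ∈ suppD D
      · have := congrFun hg ⟨k, hk⟩
        simpa [hψdef, Finset.sum_apply] using this
      · have hck : ∀ i, c i k = 0 := by
          intro i
          by_contra h0
          exact hk ⟨c i, hcD i, h0⟩
        simp [Finset.sum_apply, hck]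
    have hpair : (∑ i, g i * dotP (u (i0 : Fin n) * v (j i)) (c i)) = 0 := by
      have h1 := congrArg (fun x => dotP x (u (i0 : Fin n))) hfull
      simp only [dotP_sum_mul, dotP_rearrange] at h1
      simpa [dotP] using h1
    rw [Finset.sum_eq_single i0] at hpair
    · exact hgi0 (by
        have hne := dotP_ne_zero_of_rho_eq hρ hm (hc0 i0) (hcm i0).symm
        exact (mul_eq_zero.1 hpair).resolve_right hne)
    · intro i _ hne
      by_cases hgi : g i = 0
      · simp [hgi]
      · have hiS : i ∈ S := by simp [hSdef, hgi]
        have hle : (i0 : Fin n) ≤ (i : Fin n) := hi0min i hiS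
        have hlt : (i0 : Fin n) < (i : Fin n) := by
          rcases lt_or_eq_of_le hle with h | h
          · exact h
          · exact absurd (Subtype.coe_injective h) (Ne.symm hne)
        have hrlt : ρ (u (i0 : Fin n) * v (j i)) < m (c i) := by
          rw [hcm i]
          exact hj i (i0 : Fin n) i0.2 hlt
        rw [dotP_eq_zero_of_rho_lt hρ hm (hc0 i) hrlt, mul_zero]
    · intro h0
      exact absurd (Finset.mem_univ i0) h0
  have hcard := hli.fintype_card_le_finrank
  rw [Module.finrank_pi] at hcard
  calc I'.card = Fintype.card {x // x ∈ I'} := (Fintype.card_coe I').symm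
    _ ≤ Fintype.card (suppD D) := hcard
    _ = (suppD D).ncard := by
        rw [Set.ncard_eq_toFinset_card', Set.toFinset_card]
end

section
/- The generalized Hamming weights are strictly increasing: for a linear code C ⊆ F_q^n of dimension k and 1 ≤ t < k, d_t(C) < d_{t+1}(C). -/
variable {F : Type*} [Field F] [Fintype F] {n : ℕ}

/-- the generalized Hamming weights are strictly increasing:
`d_t(C) < d_{t+1}(C)` for `1 ≤ t < k = dim C`. -/
theorem stmt_13 (C : Submodule F (Fin n → F)) (k t : ℕ)
    (hC : Module.finrank F C = k) (ht1 : 1 ≤ t) (htk : t < k) :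
    sInf {r : ℕ | ∃ D : Submodule F (Fin n → F),
        D ≤ C ∧ Module.finrank F D = t ∧ (suppD D).ncard = r}
      < sInf {r : ℕ | ∃ D : Submodule F (Fin n → F),
        D ≤ C ∧ Module.finrank F D = t + 1 ∧ (suppD D).ncard = r} := by
  -- RHS set is nonempty
  have hne : {r : ℕ | ∃ D : Submodule F (Fin n → F),
      D ≤ C ∧ Module.finrank F D = t + 1 ∧ (suppD D).ncard = r}.Nonempty := by
    obtain ⟨f, hf⟩ := exists_linearIndependent_of_le_finrank
      (R := F) (M := C) (n := t + 1) (by omega)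
    have hg : LinearIndependent F (C.subtype ∘ f) :=
      hf.map' C.subtype C.ker_subtype
    refine ⟨_, Submodule.span F (Set.range (C.subtype ∘ f)), ?_, ?_, rfl⟩
    · rw [Submodule.span_le]
      rintro _ ⟨j, rfl⟩
      exact (f j).2
    · rw [finrank_span_eq_card hg, Fintype.card_fin]
  obtain ⟨D, hDC, hDrank, hDcard⟩ := Nat.sInf_mem hne
  -- D is nonzero, pick i in its support
  have hDne : ∃ c : Fin n → F, c ∈ D ∧ c ≠ 0 := by
    have : D ≠ ⊥ := by
      intro h
      rw [h, finrank_bot] at hDrank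
      omega
    obtain ⟨c, hc, hc0⟩ := Submodule.exists_mem_ne_zero_of_ne_bot this
    exact ⟨c, hc, hc0⟩
  obtain ⟨c, hcD, hc0⟩ := hDne
  obtain ⟨i, hci⟩ : ∃ i, c i ≠ 0 := Function.ne_iff.mp hc0
  have hiD : i ∈ suppD D := ⟨c, hcD, hci⟩
  -- the evaluation map at i restricted to D
  set φ : D →ₗ[F] F := (LinearMap.proj i).comp D.subtype with hφ
  have hφrange : Module.finrank F (LinearMap.range φ) = 1 := by
    have h1 : LinearMap.range φ ≠ ⊥ := by
      intro h
      have : φ ⟨c, hcD⟩ = 0 := by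
        have := LinearMap.mem_range_self φ ⟨c, hcD⟩
        rw [h] at this
        simpa using this
      exact hci this
    have hle : Module.finrank F (LinearMap.range φ) ≤ 1 := by
      simpa using Submodule.finrank_le (LinearMap.range φ)
    have hpos : Module.finrank F (LinearMap.range φ) ≠ 0 := by
      intro h0
      exact h1 (Submodule.finrank_eq_zero.mp h0)
    omega
  have hker : Module.finrank F (LinearMap.ker φ) = t := by
    have := LinearMap.finrank_range_add_finrank_ker φ
    rw [hφrange, hDrank] at this
    omega
  set D' : Submodule F (Fin n → F) := (LinearMap.ker φ).map D.subtype with hD'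
  have hD'rank : Module.finrank F D' = t := by
    rw [hD', Submodule.finrank_map_subtype_eq]
    exact hker
  have hD'C : D' ≤ C := le_trans (Submodule.map_subtype_le D _) hDC
  -- support of D' is strictly contained in support of D
  have hsub : suppD D' ⊆ suppD D := by
    rintro j ⟨a, haD', haj⟩
    obtain ⟨⟨x, hxD⟩, hxker, rfl⟩ := haD'
    exact ⟨x, hxD, haj⟩
  have hiD' : i ∉ suppD D' := by
    rintro ⟨a, haD', hai⟩
    obtain ⟨⟨x, hxD⟩, hxker, rfl⟩ := haD'
    have : x i = 0 := hxker
    exact hai this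
  have hss : suppD D' ⊂ suppD D := ⟨hsub, fun h => hiD' (h hiD)⟩
  have hlt : (suppD D').ncard < (suppD D).ncard :=
    Set.ncard_lt_ncard hss (Set.toFinite _)
  calc sInf {r : ℕ | ∃ D : Submodule F (Fin n → F),
        D ≤ C ∧ Module.finrank F D = t ∧ (suppD D).ncard = r}
      ≤ (suppD D').ncard := Nat.sInf_le ⟨D', hD'C, hD'rank, rfl⟩
    _ < (suppD D).ncard := hlt
    _ = _ := hDcard
end
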